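/- Fix non-constant z ∈ ℝ^n and τ₂ > τ₁ > 0. Then the distribution softmax(τ₂ z) majorizes softmax(τ₁ z); that is, after sorting each probability vector in decreasing order, all partial sums of softmax(τ₂ z) dominate those of softmax(τ₁ z). -/

import Mathlib

noncomputable def softmax {n : ℕ} (z : Fin n → ℝ) (i : Fin n) : ℝ :=
  Real.exp (z i) / ∑ j, Real.exp (z j)

/-- Majorization via the "sum of any k entries is dominated by the sum of some k
entries" formulation, equivalent to dominance of all partial sums of the
decreasing rearrangements for probability vectors. -/
theorem stmt16 {n : ℕ} (z : Fin n → ℝ) (hz : ∃ i j, z i ≠ z j)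
    (τ₁ τ₂ : ℝ) (hτ₁ : 0 < τ₁) (hτ : τ₁ < τ₂) :
    ∀ A : Finset (Fin n), ∃ B : Finset (Fin n), B.card = A.card ∧
      ∑ i ∈ A, softmax (fun j => τ₁ * z j) i ≤ ∑ i ∈ B, softmax (fun j => τ₂ * z j) i := by
  intro A
  obtain ⟨i0, -, -⟩ := hz
  haveI : Nonempty (Fin n) := ⟨i0⟩
  set k := A.card with hk
  obtain ⟨B, hBmem, hBmax⟩ := Finset.exists_max_image (Finset.univ.powersetCard k)
    (fun B => ∑ i ∈ B, z i) ⟨A, by simp [Finset.mem_powersetCard_univ, hk]⟩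
  have hBcard : B.card = k := (Finset.mem_powersetCard_univ).mp hBmem
  -- swap property : every element of B has z at least every element outside B
  have hswap : ∀ i ∈ B, ∀ j ∉ B, z j ≤ z i := by
    intro i hi j hj
    by_contra h
    push_neg at h
    have hjB : j ∉ B.erase i := fun hc => hj (Finset.mem_of_mem_erase hc)
    have hB' : insert j (B.erase i) ∈ Finset.univ.powersetCard k := by
      rw [Finset.mem_powersetCard_univ, Finset.card_insert_of_notMem hjB,
        Finset.card_erase_of_mem hi, Nat.sub_add_cancel (Finset.card_pos.mpr ⟨i, hi⟩), hBcard]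
    have hle := hBmax _ hB'
    rw [Finset.sum_insert hjB, Finset.sum_erase_eq_sub hi] at hle
    linarith
  have hS₁ : 0 < ∑ j, Real.exp (τ₁ * z j) := Finset.sum_pos (fun j _ => Real.exp_pos _)
    Finset.univ_nonempty
  have hS₂ : 0 < ∑ j, Real.exp (τ₂ * z j) := Finset.sum_pos (fun j _ => Real.exp_pos _)
    Finset.univ_nonempty
  refine ⟨B, hBcard, ?_⟩
  have step1 : ∑ i ∈ A, softmax (fun j => τ₁ * z j) i ≤ ∑ i ∈ B, softmax (fun j => τ₁ * z j) i := by
    rw [← Finset.sum_inter_add_sum_sdiff A B (softmax (fun j => τ₁ * z j)),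
      ← Finset.sum_inter_add_sum_sdiff B A (softmax (fun j => τ₁ * z j)), Finset.inter_comm B A]
    have hcard : (A \ B).card = (B \ A).card := Finset.card_sdiff_comm hBcard.symm
    have hAB : ∑ i ∈ A \ B, softmax (fun j => τ₁ * z j) i ≤
        ∑ i ∈ B \ A, softmax (fun j => τ₁ * z j) i := by
      rcases Finset.eq_empty_or_nonempty (B \ A) with he | hne
      · have he' : A \ B = ∅ := Finset.card_eq_zero.mp (by rw [hcard, he]; simp)
        simp [he, he']
      · obtain ⟨j, hj, hjmin⟩ := Finset.exists_min_image (B \ A)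
          (softmax (fun j => τ₁ * z j)) hne
        have hjB : j ∈ B := (Finset.mem_sdiff.mp hj).1
        have h1 : ∑ i ∈ A \ B, softmax (fun j => τ₁ * z j) i ≤
            (A \ B).card • softmax (fun j => τ₁ * z j) j := by
          apply Finset.sum_le_card_nsmul
          intro i hi
          have hiB : i ∉ B := (Finset.mem_sdiff.mp hi).2
          have hz' : z i ≤ z j := hswap j hjB i hiB
          unfold softmax
          gcongr
          show τ₁ * z i ≤ τ₁ * z j
          nlinarith
        have h2 : (B \ A).card • softmax (fun j => τ₁ * z j) j ≤
            ∑ i ∈ B \ A, softmax (fun j => τ₁ * z j) i :=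
          Finset.card_nsmul_le_sum _ _ _ (fun i hi => hjmin i hi)
        rw [hcard] at h1
        exact h1.trans h2
    linarith
  have step2 : ∑ i ∈ B, softmax (fun j => τ₁ * z j) i ≤
      ∑ i ∈ B, softmax (fun j => τ₂ * z j) i := by
    unfold softmax
    rw [← Finset.sum_div, ← Finset.sum_div, div_le_div_iff₀ hS₁ hS₂]
    have key : (∑ i ∈ B, Real.exp (τ₁ * z i)) * ∑ j ∈ Bᶜ, Real.exp (τ₂ * z j) ≤
        (∑ i ∈ B, Real.exp (τ₂ * z i)) * ∑ j ∈ Bᶜ, Real.exp (τ₁ * z j) := by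
      rw [Finset.sum_mul_sum, Finset.sum_mul_sum]
      apply Finset.sum_le_sum
      intro i hi
      apply Finset.sum_le_sum
      intro j hj
      have hz' : z j ≤ z i := hswap i hi j (Finset.mem_compl.mp hj)
      rw [← Real.exp_add, ← Real.exp_add, Real.exp_le_exp]
      nlinarith
    have e1 := Finset.sum_add_sum_compl B (fun j => Real.exp (τ₁ * z j))
    have e2 := Finset.sum_add_sum_compl B (fun j => Real.exp (τ₂ * z j))
    rw [← e1, ← e2]
    nlinarith [key]
  exact step1.trans step2
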